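/- If D1 is a Condorcet domain on a set A of alternatives and D2 is a Condorcet domain on a set B of alternatives with A and B disjoint, then the set of all concatenations uv (u ∈ D1, v ∈ D2), viewed as linear orders on A ∪ B ranking every element of A above every element of B within u followed by v, is a Condorcet domain on A ∪ B. -/

import Mathlib

/-- The majority relation of a profile `P` of `k` voters: `a` beats `b` if more voters
rank `a` above `b` than rank `b` above `a`. -/
def Maj {α : Type*} {k : ℕ} (P : Fin k → α → α → Prop) (a b : α) : Prop :=
  Nat.card {i : Fin k // P i a b} > Nat.card {i : Fin k // P i b a}

/-- `D` is a Condorcet domain: a set of linear orders (strict total orders) on the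
alternatives such that every profile with an odd number of voters drawn from `D`
has a transitive majority relation. -/
def IsCondorcetDomain {α : Type*} (D : Set (α → α → Prop)) : Prop :=
  (∀ r ∈ D, IsStrictTotalOrder α r) ∧
  ∀ (k : ℕ), Odd k → ∀ P : Fin k → α → α → Prop,
    (∀ i, P i ∈ D) → Transitive (Maj P)

/-- The concatenation `uv`: agrees with `u` on `α`, with `v` on `β`, and ranks every
element of `α` above every element of `β`. -/
def concatAB {α β : Type*} (u : α → α → Prop) (v : β → β → Prop) :
    α ⊕ β → α ⊕ β → Prop
  | Sum.inl a, Sum.inl a' => u a a'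
  | Sum.inl _, Sum.inr _ => True
  | Sum.inr _, Sum.inl _ => False
  | Sum.inr b, Sum.inr b' => v b b'

/-- If `D1` is a Condorcet domain on `α` and `D2` is a Condorcet domain on `β`
(disjoint sets of alternatives, modelled as a disjoint union `α ⊕ β`), then the set
of all concatenations `uv` is a Condorcet domain on `α ⊕ β`. -/
theorem concat_isCondorcetDomain {α β : Type*}
    (D1 : Set (α → α → Prop)) (D2 : Set (β → β → Prop))
    (h1 : IsCondorcetDomain D1) (h2 : IsCondorcetDomain D2) :
    IsCondorcetDomain {r : α ⊕ β → α ⊕ β → Prop |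
      ∃ u ∈ D1, ∃ v ∈ D2, r = concatAB u v} := by
  obtain ⟨h1o, h1t⟩ := h1
  obtain ⟨h2o, h2t⟩ := h2
  constructor
  · rintro r ⟨u, hu, v, hv, rfl⟩
    have hU := h1o u hu
    have hV := h2o v hv
    refine { trichotomous := ?_, irrefl := ?_, trans := ?_ }
    · rintro (a | b) (a' | b')
      · intro h h'
        exact congrArg Sum.inl (hU.trichotomous a a' h h')
      · intro h _
        exact absurd trivial h
      · intro _ h
        exact absurd trivial h
      · intro h h'
        exact congrArg Sum.inr (hV.trichotomous b b' h h')
    · rintro (a | b) h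
      · exact hU.irrefl a h
      · exact hV.irrefl b h
    · rintro (a | b) (a' | b') (a'' | b'') hxy hyz <;>
        simp only [concatAB] at hxy hyz ⊢ <;>
        first
          | trivial
          | exact hxy.elim
          | exact hyz.elim
          | exact hU.trans _ _ _ hxy hyz
          | exact hV.trans _ _ _ hxy hyz
  · intro k hk P hP
    choose u hu v hv hPuv using hP
    have cardA : ∀ (x y : α),
        Nat.card {i : Fin k // P i (Sum.inl x) (Sum.inl y)} = Nat.card {i : Fin k // u i x y} :=
      fun x y => Nat.card_congr (Equiv.subtypeEquivRight fun i => by rw [hPuv i]; exact Iff.rfl)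
    have cardB : ∀ (x y : β),
        Nat.card {i : Fin k // P i (Sum.inr x) (Sum.inr y)} = Nat.card {i : Fin k // v i x y} :=
      fun x y => Nat.card_congr (Equiv.subtypeEquivRight fun i => by rw [hPuv i]; exact Iff.rfl)
    have cardT : ∀ (a : α) (b : β),
        Nat.card {i : Fin k // P i (Sum.inl a) (Sum.inr b)} = k := by
      intro a b
      have : Nat.card {i : Fin k // P i (Sum.inl a) (Sum.inr b)} = Nat.card (Fin k) :=
        Nat.card_congr ((Equiv.subtypeEquivRight fun i => by rw [hPuv i]; exact Iff.rfl).trans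
          (Equiv.subtypeUnivEquiv fun _ => trivial))
      simpa using this
    have cardF : ∀ (a : α) (b : β),
        Nat.card {i : Fin k // P i (Sum.inr b) (Sum.inl a)} = 0 := by
      intro a b
      have : IsEmpty {i : Fin k // P i (Sum.inr b) (Sum.inl a)} := by
        constructor
        rintro ⟨i, hi⟩
        rw [hPuv i] at hi
        exact hi
      exact Nat.card_of_isEmpty
    have majAB : ∀ (a : α) (b : β), Maj P (Sum.inl a) (Sum.inr b) := by
      intro a b
      unfold Maj
      rw [cardT, cardF]
      exact hk.pos
    have majnot : ∀ (a : α) (b : β), ¬ Maj P (Sum.inr b) (Sum.inl a) := by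
      intro a b h
      unfold Maj at h
      rw [cardT, cardF] at h
      omega
    have majA : ∀ x y : α, Maj P (Sum.inl x) (Sum.inl y) ↔ Maj u x y := by
      intro x y; unfold Maj; rw [cardA, cardA]
    have majB : ∀ x y : β, Maj P (Sum.inr x) (Sum.inr y) ↔ Maj v x y := by
      intro x y; unfold Maj; rw [cardB, cardB]
    rintro (a | b) (a' | b') (a'' | b'') hxy hyz
    · exact (majA _ _).2 (h1t k hk u hu ((majA _ _).1 hxy) ((majA _ _).1 hyz))
    · exact majAB _ _
    · exact absurd hyz (majnot _ _)
    · exact majAB _ _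
    · exact absurd hxy (majnot _ _)
    · exact absurd hxy (majnot _ _)
    · exact absurd hyz (majnot _ _)
    · exact (majB _ _).2 (h2t k hk v hv ((majB _ _).1 hxy) ((majB _ _).1 hyz))
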